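/- arXiv:1004.1298 — 2 statements merged into one kernel-verified Lean document; each statement's English description precedes it below -/
import Mathlib

section
/- In the level-wise NFA built from a finite set G of generalized strings of length ℓ, within each level Q_i the languages of distinct states are pairwise disjoint. Proof proceeds by downward induction on i using that each state r ∈ Q_{i+1} reachable on a given character σ determines its parent uniquely via the Parent function. -/
open List Set

/-- The language of a state `q` of an NFA: strings leading from `q` to an accepting state. -/
def stateLang {α σ : Type} (M : NFA α σ) (q : σ) : Set (List α) :=
  {s | (M.evalFrom {q} s ∩ M.accept).Nonempty}

/-- A state is accessible if it is reachable from some start state on some string. -/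
def Accessible {α σ : Type} (M : NFA α σ) (q : σ) : Prop := ∃ s : List α, q ∈ M.eval s

/-- A simple NFA: all states accessible, all state languages nonempty and pairwise disjoint. -/
def IsSimple {α σ : Type} (M : NFA α σ) : Prop :=
  (∀ q : σ, Accessible M q) ∧ (∀ q : σ, (stateLang M q).Nonempty) ∧
  (∀ p q : σ, p ≠ q → Disjoint (stateLang M p) (stateLang M q))

/-- The automaton obtained by adding self-transitions (on every character) to all start states. -/
def loopNFA {α σ : Type} (M : NFA α σ) : NFA α σ where
  step q a := {x | x = q ∧ q ∈ M.start} ∪ M.step q a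
  start := M.start
  accept := M.accept

/-- The parent of a state `(H, k)` under character `a`:
`Parent ((H, k), a) = ({h ∈ H | a ∈ h[k]}, k - 1)`. -/
def Parent {α : Type} (p : Set (List (Set α)) × ℕ) (a : α) : Set (List (Set α)) × ℕ :=
  ({h ∈ p.1 | a ∈ h.getD (p.2 - 1) ∅}, p.2 - 1)

/-- `LevelAux G ℓ j` is the level `Q_{ℓ - j}`: `Q_ℓ = {(G, ℓ)}` and each higher level
consists of the nonempty parents of states of the level below. -/
def LevelAux {α : Type} (G : Set (List (Set α))) (ℓ : ℕ) : ℕ → Set (Set (List (Set α)) × ℕ)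
  | 0 => {(G, ℓ)}
  | j + 1 => {p | p.1.Nonempty ∧ ∃ q ∈ LevelAux G ℓ j, ∃ a : α, Parent q a = p}

/-- The level-wise NFA built from a set `G` of generalized strings of length `ℓ`:
transitions go from a state to those states of the next level whose parent it is,
the start states are the top level `Q_0` and the accepting state is `(G, ℓ)`. -/
def levelNFA {α : Type} (G : Set (List (Set α))) (ℓ : ℕ) :
    NFA α (Set (List (Set α)) × ℕ) where
  step p a := {q | p.2 < ℓ ∧ q ∈ LevelAux G ℓ (ℓ - (p.2 + 1)) ∧ Parent q a = p}
  start := LevelAux G ℓ ℓ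
  accept := {(G, ℓ)}

lemma evalFrom_mono {α σ : Type} (M : NFA α σ) :
    ∀ (t : List α) ⦃S T : Set σ⦄, S ⊆ T → M.evalFrom S t ⊆ M.evalFrom T t := by
  intro t
  induction t with
  | nil => intro S T h; exact h
  | cons a t ih =>
    intro S T h
    apply ih
    intro z hz
    rw [NFA.mem_stepSet] at hz ⊢
    obtain ⟨r, hr, hzr⟩ := hz
    exact ⟨r, h hr, hzr⟩

lemma mem_evalFrom_exists {α σ : Type} (M : NFA α σ) :
    ∀ (t : List α) (T : Set σ) (x : σ), x ∈ M.evalFrom T t → ∃ r ∈ T, x ∈ M.evalFrom {r} t := by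
  intro t
  induction t with
  | nil => intro T x hx; exact ⟨x, hx, rfl⟩
  | cons a t ih =>
    intro T x hx
    have hx' : x ∈ M.evalFrom (M.stepSet T a) t := hx
    obtain ⟨y, hy, hxy⟩ := ih _ _ hx'
    rw [NFA.mem_stepSet] at hy
    obtain ⟨r, hr, hyr⟩ := hy
    refine ⟨r, hr, ?_⟩
    have hmono : M.evalFrom {y} t ⊆ M.evalFrom (M.stepSet {r} a) t := by
      apply evalFrom_mono
      intro z hz
      rw [Set.mem_singleton_iff] at hz
      subst hz
      rw [NFA.mem_stepSet]
      exact ⟨r, rfl, hyr⟩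
    exact hmono hxy

lemma levelAux_snd {α : Type} (G : Set (List (Set α))) (ℓ : ℕ) :
    ∀ j, ∀ p ∈ LevelAux G ℓ j, p.2 = ℓ - j := by
  intro j
  induction j with
  | zero => intro p hp; simp only [LevelAux, Set.mem_singleton_iff] at hp; subst hp; simp
  | succ j ih =>
    rintro p ⟨-, q, hq, a, rfl⟩
    have := ih q hq
    simp [Parent, this]
    omega

lemma levelNFA_key {α : Type} (G : Set (List (Set α))) (ℓ : ℕ) :
    ∀ d, ∀ i, i + d = ℓ → ∀ p ∈ LevelAux G ℓ d, ∀ q ∈ LevelAux G ℓ d, p ≠ q →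
      Disjoint (stateLang (levelNFA G ℓ) p) (stateLang (levelNFA G ℓ) q) := by
  intro d
  induction d with
  | zero =>
    intro i hi p hp q hq hpq
    simp only [LevelAux, Set.mem_singleton_iff] at hp hq
    exact absurd (hp.trans hq.symm) hpq
  | succ d ih =>
    intro i hi p hp q hq hpq
    rw [Set.disjoint_left]
    intro s hsp hsq
    have hp2 : p.2 = i := by have := levelAux_snd G ℓ _ p hp; omega
    have hq2 : q.2 = i := by have := levelAux_snd G ℓ _ q hq; omega
    cases s with
    | nil =>
      obtain ⟨x, hx, hacc⟩ := hsp
      have hxp : x = p := hx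
      simp only [levelNFA, Set.mem_singleton_iff] at hacc
      subst hxp
      rw [hacc] at hp2
      simp at hp2
      omega
    | cons a t =>
      obtain ⟨x, hx, hacc⟩ := hsp
      obtain ⟨x', hx', hacc'⟩ := hsq
      have hx2 : x ∈ (levelNFA G ℓ).evalFrom ((levelNFA G ℓ).stepSet {p} a) t := hx
      have hx2' : x' ∈ (levelNFA G ℓ).evalFrom ((levelNFA G ℓ).stepSet {q} a) t := hx'
      obtain ⟨r, hr, hxr⟩ := mem_evalFrom_exists _ _ _ _ hx2
      obtain ⟨r', hr', hxr'⟩ := mem_evalFrom_exists _ _ _ _ hx2'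
      rw [NFA.mem_stepSet] at hr hr'
      obtain ⟨p', hp', hrp⟩ := hr
      obtain ⟨q', hq', hrq⟩ := hr'
      rw [Set.mem_singleton_iff] at hp' hq'
      subst hp'; subst hq'
      obtain ⟨-, hrlev, hrpar⟩ := hrp
      obtain ⟨-, hrlev', hrpar'⟩ := hrq
      rw [hp2] at hrlev
      rw [hq2] at hrlev'
      have hd : ℓ - (i + 1) = d := by omega
      rw [hd] at hrlev hrlev'
      have hrr : r = r' := by
        by_contra hne
        have hdisj := ih (i + 1) (by omega) r hrlev r' hrlev' hne
        rw [Set.disjoint_left] at hdisj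
        exact hdisj ⟨x, hxr, hacc⟩ ⟨x', hxr', hacc'⟩
      subst hrr
      exact hpq (hrpar ▸ hrpar' ▸ rfl)

/-- In the level-wise NFA built from a finite nonempty set of generalized strings of
equal length `ℓ`, within each level `Q_i` the languages of distinct states are
pairwise disjoint. -/
theorem levelNFA_levelwise_disjoint {α : Type} (G : Set (List (Set α))) (ℓ : ℕ)
    (hfin : G.Finite) (hG : G.Nonempty)
    (hlen : ∀ g ∈ G, g.length = ℓ)
    (hne : ∀ g ∈ G, ∀ S ∈ g, S.Nonempty) :
    ∀ i ≤ ℓ, ∀ p ∈ LevelAux G ℓ (ℓ - i), ∀ q ∈ LevelAux G ℓ (ℓ - i), p ≠ q →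
      Disjoint (stateLang (levelNFA G ℓ) p) (stateLang (levelNFA G ℓ) q) := by
  intro i hi p hp q hq hpq
  exact levelNFA_key G ℓ (ℓ - i) i (by omega) p hp q hq hpq
end

section
/- Let g be a generalized string and d_max ∈ ℕ. In the Hamming-neighborhood NFA built from (g, d_max), the language of state (e, k) is exactly the set of strings s of length |g| − k whose Hamming distance to the suffix of g starting at position k+1 is exactly e. -/
open List Set

/-- Hamming distance between a string `s` and a generalized string `h` of the same
length: the number of positions `i` with `s[i] ∉ h[i]`. -/
noncomputable def hamDist {α : Type} (s : List α) (h : List (Set α)) : ℕ :=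
  Nat.card {i : Fin s.length // s.get i ∉ h.getD (i : ℕ) ∅}

/-- The state space of the Hamming-neighborhood NFA for `(g, d)`:
pairs `(e, k)` with `0 ≤ e ≤ d`, `0 ≤ k ≤ |g|` and `|g| - k - e ≥ 0`. -/
def hamQ {α : Type} (g : List (Set α)) (d : ℕ) : Set (ℕ × ℕ) :=
  {p | p.1 ≤ d ∧ p.2 ≤ g.length ∧ p.1 + p.2 ≤ g.length}

/-- The Hamming-neighborhood NFA for a generalized string `g` and threshold `d`:
from `(e, k)` reading a matching character leads to `(e, k+1)`, a mismatching one to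
`(e-1, k+1)`, clipped to the state space; start states `(e, 0)`, accepting state
`(0, |g|)`. -/
def hamNFA {α : Type} (g : List (Set α)) (d : ℕ) : NFA α (ℕ × ℕ) where
  step p a := {q ∈ hamQ g d |
      (a ∈ g.getD p.2 ∅ ∧ q = (p.1, p.2 + 1)) ∨
      (a ∉ g.getD p.2 ∅ ∧ 0 < p.1 ∧ q = (p.1 - 1, p.2 + 1))}
  start := {p ∈ hamQ g d | p.2 = 0}
  accept := {(0, g.length)}

open Classical in
noncomputable def hd' {α : Type} : List α → List (Set α) → ℕ
  | [], _ => 0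
  | a :: t, h => (if a ∈ h.getD 0 ∅ then 0 else 1) + hd' t h.tail

lemma getD_tail {α : Type} (h : List (Set α)) (i : ℕ) :
    h.getD (i + 1) ∅ = h.tail.getD i ∅ := by
  cases h <;> simp [List.getD]

lemma hamDist_eq_hd' {α : Type} (s : List α) (h : List (Set α)) :
    hamDist s h = hd' s h := by
  classical
  induction s generalizing h with
  | nil => simp [hamDist, hd', Nat.card_of_isEmpty]
  | cons a t ih =>
    rw [hamDist, Nat.card_eq_fintype_card, Fintype.card_subtype, Finset.card_filter]
    simp only [List.length_cons]
    rw [Fin.sum_univ_succ]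
    simp only [List.get_cons_zero, Fin.val_zero, Fin.val_succ, List.get_cons_succ]
    rw [hd']
    congr 1
    · by_cases hm : a ∈ h.getD 0 ∅ <;> simp [hm]
    · rw [← ih, hamDist, Nat.card_eq_fintype_card, Fintype.card_subtype, Finset.card_filter]
      apply Finset.sum_congr rfl
      intro i _
      simp only [getD_tail]
      rfl

lemma hd'_le {α : Type} (s : List α) (h : List (Set α)) : hd' s h ≤ s.length := by
  induction s generalizing h with
  | nil => simp [hd']
  | cons a t ih =>
    rw [hd']
    have := ih h.tail
    split <;> simp <;> omega

lemma getD_drop' {α : Type} (g : List (Set α)) (k i : ℕ) :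
    (g.drop k).getD i ∅ = g.getD (k + i) ∅ := by
  simp [List.getD_eq_getElem?_getD, List.getElem?_drop]

lemma mem_evalFrom_iff {α σ : Type} (M : NFA α σ) (t : List α) :
    ∀ (S : Set σ) (x : σ), x ∈ M.evalFrom S t ↔ ∃ q ∈ S, x ∈ M.evalFrom {q} t := by
  induction t with
  | nil => simp [NFA.evalFrom_nil]
  | cons a t ih =>
    intro S x
    have h1 : M.evalFrom S (a :: t) = M.evalFrom (M.stepSet S a) t := rfl
    rw [h1, ih]
    constructor
    · rintro ⟨p, hp, hx⟩
      rw [NFA.mem_stepSet] at hp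
      obtain ⟨q, hq, hpq⟩ := hp
      refine ⟨q, hq, ?_⟩
      have h2 : M.evalFrom {q} (a :: t) = M.evalFrom (M.stepSet {q} a) t := rfl
      rw [h2, ih]
      exact ⟨p, M.mem_stepSet.2 ⟨q, rfl, hpq⟩, hx⟩
    · rintro ⟨q, hq, hx⟩
      have h2 : M.evalFrom {q} (a :: t) = M.evalFrom (M.stepSet {q} a) t := rfl
      rw [h2, ih] at hx
      obtain ⟨p, hp, hx⟩ := hx
      rw [NFA.mem_stepSet] at hp
      obtain ⟨q', hq', hpq⟩ := hp
      simp only [Set.mem_singleton_iff] at hq'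
      exact ⟨p, M.mem_stepSet.2 ⟨q, hq, hq' ▸ hpq⟩, hx⟩

lemma stateLang_cons {α σ : Type} (M : NFA α σ) (q : σ) (a : α) (t : List α) :
    a :: t ∈ stateLang M q ↔ ∃ q' ∈ M.step q a, t ∈ stateLang M q' := by
  simp only [stateLang, Set.mem_setOf_eq, Set.Nonempty, Set.mem_inter_iff]
  have h1 : M.evalFrom {q} (a :: t) = M.evalFrom (M.stepSet {q} a) t := rfl
  constructor
  · rintro ⟨x, hx, hacc⟩
    rw [h1, mem_evalFrom_iff] at hx
    obtain ⟨p, hp, hx⟩ := hx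
    rw [NFA.mem_stepSet] at hp
    obtain ⟨q', hq', hpq⟩ := hp
    simp only [Set.mem_singleton_iff] at hq'
    subst hq'
    exact ⟨p, hpq, x, hx, hacc⟩
  · rintro ⟨q', hq', x, hx, hacc⟩
    refine ⟨x, ?_, hacc⟩
    rw [h1, mem_evalFrom_iff]
    exact ⟨q', M.mem_stepSet.2 ⟨q, rfl, hq'⟩, hx⟩

lemma hamNFA_key {α : Type} (g : List (Set α)) (d : ℕ) :
    ∀ (s : List α) (e k : ℕ), (e, k) ∈ hamQ g d →
      (s ∈ stateLang (hamNFA g d) (e, k) ↔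
        s.length = g.length - k ∧ hd' s (g.drop k) = e) := by
  intro s
  induction s with
  | nil =>
    intro e k hq
    obtain ⟨_, hk, _⟩ := hq
    simp only [stateLang, NFA.evalFrom_nil, Set.mem_setOf_eq, hamNFA]
    constructor
    · rintro ⟨x, hx1, hx2⟩
      simp only [Set.mem_singleton_iff] at hx1 hx2
      subst hx1
      rw [Prod.mk.injEq] at hx2
      refine ⟨by simp; omega, ?_⟩
      simp [hd']
      omega
    · rintro ⟨h1, h2⟩
      simp only [List.length_nil] at h1
      simp only [hd'] at h2
      refine ⟨(e, k), rfl, ?_⟩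
      simp only [Set.mem_singleton_iff, Prod.mk.injEq]
      omega
  | cons a t ih =>
    intro e k hq
    rw [stateLang_cons]
    have hstep : ∀ q' : ℕ × ℕ, q' ∈ (hamNFA g d).step (e, k) a ↔
        q' ∈ hamQ g d ∧ ((a ∈ g.getD k ∅ ∧ q' = (e, k + 1)) ∨
          (a ∉ g.getD k ∅ ∧ 0 < e ∧ q' = (e - 1, k + 1))) := by
      intro q'; rfl
    have hdd : (g.drop k).getD 0 ∅ = g.getD k ∅ := by
      rw [getD_drop', Nat.add_zero]
    have htl : (g.drop k).tail = g.drop (k + 1) := List.tail_drop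
    by_cases hm : a ∈ g.getD k ∅
    · constructor
      · rintro ⟨q', hq', ht⟩
        rw [hstep] at hq'
        obtain ⟨hQ', hcase⟩ := hq'
        rcases hcase with ⟨-, rfl⟩ | ⟨hm', -, -⟩
        · obtain ⟨hlen, hhd⟩ := (ih e (k + 1) hQ').1 ht
          obtain ⟨_, hk1, _⟩ := hQ'
          refine ⟨by simp; omega, ?_⟩
          rw [hd', hdd, if_pos hm, htl, hhd]
          omega
        · exact absurd hm hm'
      · rintro ⟨hlen, hhd⟩
        rw [hd', hdd, if_pos hm, htl] at hhd
        simp only [List.length_cons] at hlen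
        have hle := hd'_le t (g.drop (k + 1))
        obtain ⟨hd1, hk1, _⟩ := hq
        have hQ' : (e, k + 1) ∈ hamQ g d := ⟨hd1, by omega, by omega⟩
        exact ⟨(e, k + 1), (hstep _).2 ⟨hQ', Or.inl ⟨hm, rfl⟩⟩,
          (ih e (k + 1) hQ').2 ⟨by omega, by omega⟩⟩
    · constructor
      · rintro ⟨q', hq', ht⟩
        rw [hstep] at hq'
        obtain ⟨hQ', hcase⟩ := hq'
        rcases hcase with ⟨hm', -⟩ | ⟨-, he, rfl⟩
        · exact absurd hm' hm
        · obtain ⟨hlen, hhd⟩ := (ih (e - 1) (k + 1) hQ').1 ht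
          obtain ⟨_, hk1, _⟩ := hQ'
          refine ⟨by simp; omega, ?_⟩
          rw [hd', hdd, if_neg hm, htl, hhd]
          omega
      · rintro ⟨hlen, hhd⟩
        rw [hd', hdd, if_neg hm, htl] at hhd
        simp only [List.length_cons] at hlen
        have hle := hd'_le t (g.drop (k + 1))
        obtain ⟨hd1, hk1, _⟩ := hq
        have hQ' : (e - 1, k + 1) ∈ hamQ g d := ⟨by omega, by omega, by omega⟩
        exact ⟨(e - 1, k + 1), (hstep _).2 ⟨hQ', Or.inr ⟨hm, by omega, rfl⟩⟩,
          (ih (e - 1) (k + 1) hQ').2 ⟨by omega, by omega⟩⟩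


/-- In the Hamming-neighborhood NFA for `(g, d)`, the language of state `(e, k)` is
exactly the set of strings of length `|g| - k` whose Hamming distance to the suffix
of `g` starting at position `k + 1` is exactly `e`. -/
theorem hamNFA_stateLang {α : Type} (g : List (Set α)) (d : ℕ)
    (hne : ∀ S ∈ g, S.Nonempty) :
    ∀ e k : ℕ, (e, k) ∈ hamQ g d →
      stateLang (hamNFA g d) (e, k) =
        {s : List α | s.length = g.length - k ∧ hamDist s (g.drop k) = e} := by
  intro e k hq
  ext s
  rw [Set.mem_setOf_eq, hamDist_eq_hd']
  exact hamNFA_key g d s e k hq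
end
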